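/- Let n ≥ 2, 1 ≤ i ≤ n/2, k ≥ 0, and let P be a k-Rvalid vector of size n with exactly i nonempty entries. Then the number of elements of succ(P) having exactly 2i nonempty entries equals i!·C(n−i, i); in particular, when n = 2i this number equals i!. -/

import Mathlib

open Finset

/-- `Π·h`: the vector whose `q`-th entry is the union of the `Π p` over all `p` with `h p = q`. -/
def dotAct {n : ℕ} (Pi : Fin n → Finset ℕ) (h : Fin n → Fin n) : Fin n → Finset ℕ :=
  fun q => (Finset.univ.filter (fun p => h p = q)).biUnion Pi

/-- Entrywise union of two vectors of sets. -/
def vUnion {n : ℕ} (Pi Pi' : Fin n → Finset ℕ) : Fin n → Finset ℕ :=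
  fun q => Pi q ∪ Pi' q

/-- `r = max (π₀ ∪ … ∪ π_{n−1})`. -/
def vMax {n : ℕ} (Pi : Fin n → Finset ℕ) : ℕ :=
  (Finset.univ.sup Pi).sup id

/-- `Π↑`: add `r = max (π₀ ∪ … ∪ π_{n−1})` to every element of every entry. -/
def vUp {n : ℕ} (Pi : Fin n → Finset ℕ) : Fin n → Finset ℕ :=
  fun q => (Pi q).image (· + vMax Pi)

/-- A `k`-EXPcomposition of size `n`: pairwise disjoint entries whose union is `{1,…,2^k}`. -/
def IsEXP {n : ℕ} (k : ℕ) (Pi : Fin n → Finset ℕ) : Prop :=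
  (∀ p q : Fin n, p ≠ q → Disjoint (Pi p) (Pi q)) ∧
    Finset.univ.sup Pi = Finset.Icc 1 (2 ^ k)

/-- A `k`-Rvalid vector of size `n`. -/
def IsRvalid {n : ℕ} (k : ℕ) (ρ : Fin n → Finset ℕ) : Prop :=
  IsEXP k ρ ∧ (∀ p : Fin n, p.val = 0 → 1 ∈ ρ p) ∧
    ∀ k' < k, ∀ i ∈ Finset.Icc 1 (2 ^ k'), ∀ j ∈ Finset.Icc 1 (2 ^ k'),
      (∃ α, i ∈ ρ α ∧ j ∈ ρ α) → ∃ β, i + 2 ^ k' ∈ ρ β ∧ j + 2 ^ k' ∈ ρ β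

/-- A `k`-Lvalid vector of size `m`. -/
def IsLvalid {m : ℕ} (k : ℕ) (lam : Fin m → Finset ℕ) : Prop :=
  IsEXP k lam ∧ (∀ p : Fin m, p.val = 0 → 2 ^ k ∈ lam p) ∧
    ∀ k' < k, ∀ i ∈ Finset.Icc 1 (2 ^ k'), ∀ j ∈ Finset.Icc 1 (2 ^ k'),
      (∃ α, 2 ^ k + 1 - i ∈ lam α ∧ 2 ^ k + 1 - j ∈ lam α) →
        ∃ β, 2 ^ k + 1 - (i + 2 ^ k') ∈ lam β ∧ 2 ^ k + 1 - (j + 2 ^ k') ∈ lam β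

/-- Number of nonempty entries of a vector of sets. -/
def nne {n : ℕ} (Pi : Fin n → Finset ℕ) : ℕ :=
  (Finset.univ.filter (fun q => Pi q ≠ ∅)).card

/-- `succ(P) = {P ∪ (P·g)↑ : g}`. -/
def succSet {n : ℕ} (P : Fin n → Finset ℕ) : Finset (Fin n → Finset ℕ) :=
  (Finset.univ : Finset (Fin n → Fin n)).image (fun g => vUnion P (vUp (dotAct P g)))

/-- The graded set `U_{m,n}^{(k)}` of U-pairs. -/
def Uset (m n : ℕ) : ℕ → Set ((Fin m → Finset ℕ) × (Fin n → Finset ℕ))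
  | 0 => {x | x = (fun p => if p.val = 0 then {1} else ∅,
                   fun q => if q.val = 0 then {1} else ∅)}
  | k + 1 => {x | ∃ L P, (L, P) ∈ Uset m n k ∧ ∃ (f : Fin m → Fin m) (g : Fin n → Fin n),
      x = (vUnion (dotAct L f) (vUp L), vUnion P (vUp (dotAct P g)))}

/-- The `r`-Stirling number: partitions of `{1,…,a}` into `b` nonempty blocks
with `1,…,r` in pairwise distinct blocks. -/
noncomputable def rStirling (a b r : ℕ) : ℕ :=
  Set.ncard {C : Finset (Finset ℕ) |
    C.card = b ∧ (∅ ∉ C) ∧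
    (∀ B ∈ C, ∀ B' ∈ C, B ≠ B' → Disjoint B B') ∧
    C.sup id = Finset.Icc 1 a ∧
    ∀ x ∈ Finset.Icc 1 r, ∀ y ∈ Finset.Icc 1 r, x ≠ y →
      ∀ B ∈ C, x ∈ B → y ∉ B}

/-- The Stirling number of the second kind: the number of partitions of an
`a`-element set into `b` nonempty blocks. -/
noncomputable def stirling2 (a b : ℕ) : ℕ := rStirling a b 0

/-- The entry `s_n^{(i,j)}` (with `1 ≤ i,j ≤ n`). -/
noncomputable def sEntry (n i j : ℕ) : ℕ :=
  if i ≤ j then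
    (j - i).factorial * Nat.choose (n - i) (j - i) *
      ∑ α ∈ Finset.Icc (j - i) i, Nat.choose i α * i ^ (i - α) * stirling2 α (j - i)
  else 0

/-- The matrix `S_n`, with rows and columns indexed by `{1,…,n}`. -/
noncomputable def Smat (n : ℕ) : Matrix (Fin n) (Fin n) ℕ :=
  fun i j => sEntry n (i.val + 1) (j.val + 1)

/-- One step of the shuffle-automaton action on subsets of the grid. -/
def stepE {m n : ℕ} (E : Finset (Fin m × Fin n)) (f : Fin m → Fin m) (g : Fin n → Fin n) :
    Finset (Fin m × Fin n) :=
  E.image (fun p => (f p.1, p.2)) ∪ E.image (fun p => (p.1, g p.2))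

/-- Reachability from `{(0,0)}` by finitely many steps. -/
def Reach {m n : ℕ} (hm : 0 < m) (hn : 0 < n) (E : Finset (Fin m × Fin n)) : Prop :=
  Relation.ReflTransGen (fun E1 E2 => ∃ f g, E2 = stepE E1 f g)
    {(⟨0, hm⟩, ⟨0, hn⟩)} E

/-- Reachability from `{(0,0)}` in at most `t` steps. -/
def ReachIn {m n : ℕ} (hm : 0 < m) (hn : 0 < n) :
    ℕ → Finset (Fin m × Fin n) → Prop
  | 0, E => E = {(⟨0, hm⟩, ⟨0, hn⟩)}
  | t + 1, E => ReachIn hm hn t E ∨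
      ∃ E' f g, ReachIn hm hn t E' ∧ E = stepE E' f g

/-- `s(Λ,P) = {(i,j) : λ_i ∩ ρ_j ≠ ∅}`. -/
def sTab {m n : ℕ} (L : Fin m → Finset ℕ) (P : Fin n → Finset ℕ) :
    Finset (Fin m × Fin n) :=
  Finset.univ.filter (fun p => (L p.1 ∩ P p.2).Nonempty)

-- auxiliary lemmas

lemma mem_dotAct' {n : ℕ} (P : Fin n → Finset ℕ) (g : Fin n → Fin n) (q : Fin n) (x : ℕ) :
    x ∈ dotAct P g q ↔ ∃ p, g p = q ∧ x ∈ P p := by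
  simp [dotAct]

lemma dotAct_congr' {n : ℕ} (P : Fin n → Finset ℕ) {g g' : Fin n → Fin n}
    (h : ∀ p, P p ≠ ∅ → g p = g' p) : dotAct P g = dotAct P g' := by
  funext q; ext x
  simp only [mem_dotAct']
  constructor
  · rintro ⟨p, rfl, hx⟩
    exact ⟨p, (h p (fun h0 => by simp [h0] at hx)).symm, hx⟩
  · rintro ⟨p, rfl, hx⟩
    exact ⟨p, h p (fun h0 => by simp [h0] at hx), hx⟩

lemma sup_dotAct {n : ℕ} (P : Fin n → Finset ℕ) (g : Fin n → Fin n) :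
    Finset.univ.sup (dotAct P g) = Finset.univ.sup P := by
  ext x
  simp only [Finset.mem_sup, mem_dotAct', Finset.mem_univ, true_and]
  constructor
  · rintro ⟨q, p, -, hx⟩
    exact ⟨p, hx⟩
  · rintro ⟨p, hx⟩
    exact ⟨g p, p, rfl, hx⟩

lemma sup_Icc_id (r : ℕ) (hr : 1 ≤ r) : (Finset.Icc 1 r).sup id = r := by
  apply le_antisymm
  · exact Finset.sup_le fun x hx => (Finset.mem_Icc.mp hx).2
  · exact Finset.le_sup (f := id) (Finset.mem_Icc.mpr ⟨hr, le_refl _⟩)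

lemma vMax_eq {n k : ℕ} {P : Fin n → Finset ℕ} (hP : IsEXP k P) : vMax P = 2 ^ k := by
  unfold vMax
  rw [hP.2, sup_Icc_id _ Nat.one_le_two_pow]

lemma vMax_dotAct {n k : ℕ} {P : Fin n → Finset ℕ} (hP : IsEXP k P) (g : Fin n → Fin n) :
    vMax (dotAct P g) = 2 ^ k := by
  unfold vMax
  rw [sup_dotAct, hP.2, sup_Icc_id _ Nat.one_le_two_pow]

lemma mem_Icc_of_memP {n k : ℕ} {P : Fin n → Finset ℕ} (hP : IsEXP k P)
    {q : Fin n} {x : ℕ} (hx : x ∈ P q) : x ∈ Finset.Icc 1 (2 ^ k) := by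
  rw [← hP.2]
  exact Finset.mem_sup.mpr ⟨q, Finset.mem_univ q, hx⟩

/-- the key injectivity: `Q` determines `g` on nonempty entries. -/
lemma phi_inj {n k : ℕ} {P : Fin n → Finset ℕ} (hP : IsEXP k P)
    {g g' : Fin n → Fin n}
    (h : vUnion P (vUp (dotAct P g)) = vUnion P (vUp (dotAct P g'))) :
    ∀ p, P p ≠ ∅ → g p = g' p := by
  set r := 2 ^ k with hr
  -- one-sided subset claim
  have hsub : ∀ (a b : Fin n → Fin n),
      vUnion P (vUp (dotAct P a)) = vUnion P (vUp (dotAct P b)) →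
      ∀ q, dotAct P a q ⊆ dotAct P b q := by
    intro a b hab q x hx
    have hq := congrFun hab q
    simp only [vUnion, vUp, vMax_dotAct hP] at hq
    have h1 : x + r ∈ P q ∪ (dotAct P b q).image (· + r) := by
      rw [← hq]
      exact Finset.mem_union_right _ (Finset.mem_image_of_mem _ hx)
    obtain ⟨p, -, hxp⟩ := (mem_dotAct' P a q x).mp hx
    have hx1 : 1 ≤ x := (Finset.mem_Icc.mp (mem_Icc_of_memP hP hxp)).1
    rcases Finset.mem_union.mp h1 with h2 | h2
    · have := (Finset.mem_Icc.mp (mem_Icc_of_memP hP h2)).2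
      omega
    · obtain ⟨y, hy, hxy⟩ := Finset.mem_image.mp h2
      have : y = x := by omega
      rwa [← this]
  have hX : dotAct P g = dotAct P g' := by
    funext q
    exact le_antisymm (hsub g g' h q) (hsub g' g h.symm q)
  intro p hp
  obtain ⟨x, hx⟩ := Finset.nonempty_iff_ne_empty.mpr hp
  have h1 : x ∈ dotAct P g' (g p) := by
    rw [← hX]
    exact (mem_dotAct' P g (g p) x).mpr ⟨p, rfl, hx⟩
  obtain ⟨p', hp', hxp'⟩ := (mem_dotAct' P g' (g p) x).mp h1
  have : p' = p := by
    by_contra hne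
    exact (Finset.disjoint_left.mp (hP.1 p' p hne) hxp') hx
  rw [this] at hp'
  exact hp'.symm

lemma filter_phi {n : ℕ} (P : Fin n → Finset ℕ) (g : Fin n → Fin n) :
    (Finset.univ.filter (fun q => vUnion P (vUp (dotAct P g)) q ≠ ∅)) =
      (Finset.univ.filter (fun q => P q ≠ ∅)) ∪
        (Finset.univ.filter (fun q => P q ≠ ∅)).image g := by
  ext q
  simp only [Finset.mem_filter, Finset.mem_univ, true_and, Finset.mem_union,
    Finset.mem_image, vUnion, vUp, ← Finset.nonempty_iff_ne_empty]
  constructor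
  · rintro ⟨x, hx⟩
    rcases Finset.mem_union.mp hx with h | h
    · exact Or.inl ⟨x, h⟩
    · obtain ⟨y, hy, -⟩ := Finset.mem_image.mp h
      obtain ⟨p, hpq, hyp⟩ := (mem_dotAct' P g q y).mp hy
      exact Or.inr ⟨p, ⟨y, hyp⟩, hpq⟩
  · rintro (⟨x, hx⟩ | ⟨p, ⟨x, hx⟩, hpq⟩)
    · exact ⟨x, Finset.mem_union_left _ hx⟩
    · exact ⟨x + vMax (dotAct P g), Finset.mem_union_right _
        (Finset.mem_image_of_mem _ ((mem_dotAct' P g q x).mpr ⟨p, hpq, hx⟩))⟩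

theorem stmt10 (n k i : ℕ) (hn : 2 ≤ n) (hi1 : 1 ≤ i) (hin : 2 * i ≤ n)
    (P : Fin n → Finset ℕ) (hP : IsRvalid k P) (hc : nne P = i) :
    ((succSet P).filter (fun Q => nne Q = 2 * i)).card =
        i.factorial * Nat.choose (n - i) i ∧
      (n = 2 * i →
        ((succSet P).filter (fun Q => nne Q = 2 * i)).card = i.factorial) := by
  classical
  obtain ⟨hE, -, -⟩ := hP
  set S : Finset (Fin n) := Finset.univ.filter (fun q => P q ≠ ∅) with hSdef
  have hS : S.card = i := hc
  set ext : (↥S ↪ ↥(Sᶜ : Finset (Fin n))) → (Fin n → Fin n) :=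
    fun e p => if hp : p ∈ S then ((e ⟨p, hp⟩ : ↥(Sᶜ : Finset (Fin n))) : Fin n) else p
    with hextdef
  have hext_eq : ∀ e p (hp : p ∈ S),
      ext e p = ((e ⟨p, hp⟩ : ↥(Sᶜ : Finset (Fin n))) : Fin n) := by
    intro e p hp
    rw [hextdef]
    simp only [dif_pos hp]
  have hext_mem : ∀ e p (hp : p ∈ S), ext e p ∈ (Sᶜ : Finset (Fin n)) := by
    intro e p hp
    rw [hext_eq e p hp]
    exact (e ⟨p, hp⟩).2
  have hnne : ∀ g : Fin n → Fin n,
      nne (vUnion P (vUp (dotAct P g))) = (S ∪ S.image g).card := by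
    intro g
    unfold nne
    rw [filter_phi, ← hSdef]
  have key : ((succSet P).filter (fun Q => nne Q = 2 * i)).card
      = Fintype.card (↥S ↪ ↥(Sᶜ : Finset (Fin n))) := by
    rw [← Finset.card_univ]
    symm
    apply Finset.card_bij (fun e _ => vUnion P (vUp (dotAct P (ext e))))
    · -- membership
      intro e _
      rw [Finset.mem_filter]
      refine ⟨Finset.mem_image.mpr ⟨ext e, Finset.mem_univ _, rfl⟩, ?_⟩
      rw [hnne]
      have hdisj : Disjoint S (S.image (ext e)) := by
        rw [Finset.disjoint_right]
        intro q hq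
        obtain ⟨p, hp, rfl⟩ := Finset.mem_image.mp hq
        exact Finset.mem_compl.mp (hext_mem e p hp)
      have hinj : (S.image (ext e)).card = S.card := by
        rw [Finset.card_image_iff]
        intro p hp p' hp' hpp'
        rw [hext_eq e p hp, hext_eq e p' hp'] at hpp'
        exact congrArg Subtype.val (e.injective (Subtype.ext hpp'))
      rw [Finset.card_union_of_disjoint hdisj, hinj, hS]
      omega
    · -- injectivity
      intro e₁ h₁ e₂ h₂ heq
      have hag := phi_inj hE heq
      apply Function.Embedding.ext
      intro x
      apply Subtype.ext
      have hx : P x.1 ≠ ∅ := by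
        have hx2 : x.1 ∈ Finset.univ.filter (fun q => P q ≠ ∅) := x.2
        exact (Finset.mem_filter.mp hx2).2
      have h3 := hag x.1 hx
      rw [hext_eq e₁ x.1 x.2, hext_eq e₂ x.1 x.2] at h3
      exact h3
    · -- surjectivity
      intro Q hQ
      rw [Finset.mem_filter] at hQ
      obtain ⟨hQs, hQn⟩ := hQ
      obtain ⟨g, -, rfl⟩ := Finset.mem_image.mp hQs
      rw [hnne] at hQn
      have h1 : (S.image g).card ≤ i := hS ▸ Finset.card_image_le
      have h2 : (S ∪ S.image g).card ≤ S.card + (S.image g).card :=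
        Finset.card_union_le _ _
      have h3 : (S.image g).card = i := by omega
      have hcardu := Finset.card_union_add_card_inter S (S.image g)
      have h4 : (S ∩ S.image g).card = 0 := by omega
      have h5 : ∀ p ∈ S, g p ∈ (Sᶜ : Finset (Fin n)) := by
        intro p hp
        rw [Finset.mem_compl]
        intro hgp
        have hmemi : g p ∈ S ∩ S.image g :=
          Finset.mem_inter.mpr ⟨hgp, Finset.mem_image_of_mem g hp⟩
        rw [Finset.card_eq_zero.mp h4] at hmemi
        exact absurd hmemi (Finset.notMem_empty _)
      have hinj : Set.InjOn g ↑S := Finset.card_image_iff.mp (h3.trans hS.symm)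
      refine ⟨⟨fun x => ⟨g x.1, h5 x.1 x.2⟩,
        fun x y hxy => Subtype.ext (hinj x.2 y.2 (congrArg Subtype.val hxy))⟩,
        Finset.mem_univ _, ?_⟩
      have hagree : ∀ p, P p ≠ ∅ → ext ⟨fun x => ⟨g x.1, h5 x.1 x.2⟩,
          fun x y hxy => Subtype.ext (hinj x.2 y.2 (congrArg Subtype.val hxy))⟩ p = g p := by
        intro p hp
        have hpS : p ∈ S := by rw [hSdef]; exact Finset.mem_filter.mpr ⟨Finset.mem_univ _, hp⟩
        rw [hext_eq _ p hpS]
        rfl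
      rw [dotAct_congr' P hagree]
  have hcard2 : Fintype.card (↥S ↪ ↥(Sᶜ : Finset (Fin n)))
      = i.factorial * Nat.choose (n - i) i := by
    rw [Fintype.card_embedding_eq, Fintype.card_coe, Fintype.card_coe, Finset.card_compl, hS,
      Fintype.card_fin, Nat.descFactorial_eq_factorial_mul_choose]
  constructor
  · rw [key, hcard2]
  · intro hn2
    rw [key, hcard2, hn2]
    have h6 : 2 * i - i = i := by omega
    rw [h6, Nat.choose_self, mul_one]
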